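/- Let n ≥ 1 and let f₁,…,fₙ, g₁,…,gₙ be homogeneous polynomials of degree 2 and N a homogeneous polynomial of degree 3 in ℂ[x₁,…,xₙ] with gᵢ(f₁,…,fₙ) = N·xᵢ for all i. Then for all indices i ≠ j, the polynomial xᵢ·(∂N/∂xⱼ) belongs to the ideal I = (f₁,…,fₙ). -/

import Mathlib

open MvPolynomial

/-- For a quadro-quadric Cremona transformation with lift `F = (f₁,…,fₙ)` and cubic
form `N`, one has `xᵢ · ∂N/∂xⱼ ∈ (f₁,…,fₙ)` for all `i ≠ j`. -/
lemma pderiv_bind₁ {n : ℕ} (f : Fin n → MvPolynomial (Fin n) ℂ) (j : Fin n)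
    (p : MvPolynomial (Fin n) ℂ) :
    pderiv j (bind₁ f p) = ∑ k, bind₁ f (pderiv k p) * pderiv j (f k) := by
  induction p using MvPolynomial.induction_on with
  | C a => simp
  | add p q hp hq => simp [map_add, hp, hq, add_mul, Finset.sum_add_distrib]
  | mul_X p k hp =>
    simp only [map_mul, map_add, bind₁_X_right, Derivation.leibniz, smul_eq_mul, pderiv_X, hp,
      Pi.single_apply, apply_ite (bind₁ f), map_one, map_zero, mul_add, mul_ite, mul_one,
      mul_zero, ite_mul, zero_mul, add_mul, Finset.sum_add_distrib, Finset.sum_ite_eq,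
      Finset.sum_ite_eq', Finset.mem_univ, if_true, Finset.mul_sum, mul_comm, mul_assoc,
      mul_left_comm]
    rw [add_comm]

lemma coeff_zero_pderiv {n : ℕ} (q : MvPolynomial (Fin n) ℂ) (hq : q.IsHomogeneous 2)
    (k : Fin n) : coeff 0 (pderiv k q) = 0 := by
  conv_lhs => rw [q.as_sum, map_sum]
  rw [MvPolynomial.coeff_sum]
  apply Finset.sum_eq_zero
  intro s hs
  rw [pderiv_monomial, coeff_monomial]
  split_ifs with h
  · rcases Nat.eq_zero_or_pos (s k) with h0 | h0
    · simp [h0]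
    · have hsk : s = Finsupp.single k 1 := by
        ext j
        have hj := congrArg (fun t => t j) h.symm
        simp only [Finsupp.coe_tsub, Pi.sub_apply, Finsupp.coe_zero, Pi.zero_apply] at hj
        rcases eq_or_ne j k with rfl | hne
        · simp only [Finsupp.single_eq_same] at hj ⊢; omega
        · have := hj
          simp [Finsupp.single_apply, hne, Ne.symm hne] at this ⊢
          omega
      have : coeff s q = 0 := hq.coeff_eq_zero (by
        rw [hsk]; simp [Finsupp.degree_single])
      simp [this]
  · rfl

lemma bind₁_mem_span {n : ℕ} (f : Fin n → MvPolynomial (Fin n) ℂ)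
    (q : MvPolynomial (Fin n) ℂ) (h0 : coeff 0 q = 0) :
    bind₁ f q ∈ Ideal.span (Set.range f) := by
  have hq : q ∈ Ideal.span (Set.range (X : Fin n → MvPolynomial (Fin n) ℂ)) := by
    rw [← Set.image_univ, mem_ideal_span_X_image]
    intro m hm
    by_contra hc
    push_neg at hc
    have : m = 0 := Finsupp.ext fun i => hc i trivial
    rw [this] at hm
    exact mem_support_iff.mp hm h0
  have hmap := Ideal.mem_map_of_mem (bind₁ f).toRingHom hq
  rw [Ideal.map_span] at hmap
  have heq : (⇑(bind₁ f).toRingHom ∘ X) = f := funext fun i => by exact bind₁_X_right f i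
  rw [← Set.range_comp, heq] at hmap
  exact hmap

theorem stmt1 (n : ℕ) (hn : 1 ≤ n)
    (f g : Fin n → MvPolynomial (Fin n) ℂ)
    (N : MvPolynomial (Fin n) ℂ)
    (hf : ∀ i, (f i).IsHomogeneous 2) (hg : ∀ i, (g i).IsHomogeneous 2)
    (hN : N.IsHomogeneous 3)
    (hgf : ∀ i, bind₁ f (g i) = N * X i) :
    ∀ i j : Fin n, i ≠ j →
      X i * pderiv j N ∈ Ideal.span (Set.range f) := by
  intro i j hij
  have h := congrArg (pderiv j) (hgf i)
  rw [pderiv_bind₁, pderiv_mul, pderiv_X_of_ne hij, mul_zero, add_zero] at h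
  rw [mul_comm, ← h]
  exact Ideal.sum_mem _ fun k _ =>
    Ideal.mul_mem_right _ _ (bind₁_mem_span f _ (coeff_zero_pderiv _ (hg i) k))
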